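/- Let U be a bounded open set in ℝ^d and let f ∈ C(U̅). If f ∉ ℱ_n^{1/n}(U) for every positive integer n, then the restriction of f to U is strongly nowhere differentiable. -/

import Mathlib

open Set Filter Topology

/-- A test curve in `ℝ^d`: a `C¹` curve `c : [a,b] → ℝ^d` (with `a < b`) of unit speed
whose derivative is `γ`-Hölder for some `γ ∈ (0,1]`. -/
def IsTestCurve {d : ℕ} (a b : ℝ) (c : ℝ → EuclideanSpace ℝ (Fin d)) : Prop :=
  a < b ∧ ContDiffOn ℝ 1 c (Icc a b) ∧
    (∀ s ∈ Icc a b, ‖derivWithin c (Icc a b) s‖ = 1) ∧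
    ∃ γ ∈ Ioc (0 : ℝ) 1, ∃ ρ : ℝ, 0 ≤ ρ ∧
      ∀ s₁ ∈ Icc a b, ∀ s₂ ∈ Icc a b,
        ‖derivWithin c (Icc a b) s₂ - derivWithin c (Icc a b) s₁‖ ≤ ρ * |s₂ - s₁| ^ γ

/-- `f` is strongly nowhere differentiable on `U`: for every test curve with image in `U`,
the composition `f ∘ c` is differentiable at no point of `(a,b)`. -/
def StronglyNowhereDiffOn {d : ℕ} (f : EuclideanSpace ℝ (Fin d) → ℝ)
    (U : Set (EuclideanSpace ℝ (Fin d))) : Prop :=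
  ∀ (a b : ℝ) (c : ℝ → EuclideanSpace ℝ (Fin d)), IsTestCurve a b c →
    (∀ s ∈ Icc a b, c s ∈ U) →
    ∀ s₀ ∈ Ioo a b, ¬ DifferentiableWithinAt ℝ (f ∘ c) (Icc a b) s₀

/-- `K_n`: the points of `U` at distance at least `1/n` from the boundary of `U`. -/
def Kset {d : ℕ} (U : Set (EuclideanSpace ℝ (Fin d))) (n : ℕ) :
    Set (EuclideanSpace ℝ (Fin d)) :=
  {u ∈ U | ∀ x ∈ frontier U, 1 / (n : ℝ) ≤ ‖u - x‖}

/-- `𝒞_n^γ(U)`: unit-speed `C¹` curves `c : [-1/n, 1/n] → U` whose derivative satisfies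
`‖c'(s₂) - c'(s₁)‖ ≤ n |s₂ - s₁|^γ` and whose image lies in `K_n`. -/
def CurveClass {d : ℕ} (U : Set (EuclideanSpace ℝ (Fin d))) (n : ℕ) (γ : ℝ) :
    Set (ℝ → EuclideanSpace ℝ (Fin d)) :=
  {c | ContDiffOn ℝ 1 c (Icc (-(1 / (n : ℝ))) (1 / n)) ∧
    (∀ s ∈ Icc (-(1 / (n : ℝ))) (1 / n),
      ‖derivWithin c (Icc (-(1 / (n : ℝ))) (1 / n)) s‖ = 1) ∧
    (∀ s₁ ∈ Icc (-(1 / (n : ℝ))) (1 / n), ∀ s₂ ∈ Icc (-(1 / (n : ℝ))) (1 / n),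
      ‖derivWithin c (Icc (-(1 / (n : ℝ))) (1 / n)) s₂ -
          derivWithin c (Icc (-(1 / (n : ℝ))) (1 / n)) s₁‖ ≤ (n : ℝ) * |s₂ - s₁| ^ γ) ∧
    ∀ s ∈ Icc (-(1 / (n : ℝ))) (1 / n), c s ∈ Kset U n}

open Classical in
/-- Extend a continuous function on `closure U` to all of `ℝ^d` by zero. -/
noncomputable def extendCl {d : ℕ} (U : Set (EuclideanSpace ℝ (Fin d)))
    (f : C(closure U, ℝ)) : EuclideanSpace ℝ (Fin d) → ℝ :=
  fun x => if hx : x ∈ closure U then f ⟨x, hx⟩ else 0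

/-- `ℱ_n^γ(U)`: those `f ∈ C(U̅)` such that for some curve `c ∈ 𝒞_n^γ(U)` one has
`|f (c s) - f (c 0)| ≤ n |s|` for all `s ∈ [-1/n, 1/n]`. -/
def Fclass {d : ℕ} (U : Set (EuclideanSpace ℝ (Fin d))) (n : ℕ) (γ : ℝ) :
    Set C(closure U, ℝ) :=
  {f | ∃ c ∈ CurveClass U n γ, ∀ s ∈ Icc (-(1 / (n : ℝ))) (1 / n),
    |extendCl U f (c s) - extendCl U f (c 0)| ≤ (n : ℝ) * |s|}

/-- If `f ∈ C(U̅)` lies in no `ℱ_n^{1/n}(U)`, then the restriction of `f` to `U` is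
strongly nowhere differentiable. -/
theorem stronglyNowhereDiff_of_not_mem_fclass {d : ℕ} (U : Set (EuclideanSpace ℝ (Fin d)))
    (hU : IsOpen U) (hUb : Bornology.IsBounded U) (f : C(closure U, ℝ))
    (hf : ∀ n : ℕ, 0 < n → f ∉ Fclass U n (1 / n)) :
    StronglyNowhereDiffOn (extendCl U f) U := by
  intro a b c htest himg s₀ hs₀ hdiff
  obtain ⟨hab, hC1, hspeed, γ, hγ, ρ, hρ, hHold⟩ := htest
  set F := extendCl U f with hFdef
  set big := Icc a b with hbig
  set L := derivWithin (F ∘ c) big s₀ with hLdef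
  have hL : HasDerivWithinAt (F ∘ c) L big s₀ := hdiff.hasDerivWithinAt
  have hlo := (hasDerivWithinAt_iff_isLittleO.mp hL).def one_pos
  rw [Filter.eventually_iff, Metric.mem_nhdsWithin_iff] at hlo
  obtain ⟨δ, hδ, hbound⟩ := hlo
  -- distance from the compact image to the frontier
  have hcont : ContinuousOn c big := hC1.continuousOn
  have hK : IsCompact (c '' big) := isCompact_Icc.image_of_continuousOn hcont
  have hKU : c '' big ⊆ U := by rintro _ ⟨s, hs, rfl⟩; exact himg s hs
  obtain ⟨ε, hε, hεd⟩ : ∃ ε > 0, ∀ u ∈ c '' big, ∀ x ∈ frontier U, ε ≤ dist u x := by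
    by_cases hfr : (frontier U).Nonempty
    · obtain ⟨u₀, hu₀, hmin⟩ := hK.exists_isMinOn ⟨c a, ⟨a, ⟨le_rfl, hab.le⟩, rfl⟩⟩
        (Metric.continuous_infDist_pt (frontier U)).continuousOn
      refine ⟨Metric.infDist u₀ (frontier U), ?_, ?_⟩
      · rw [gt_iff_lt, ← (isClosed_frontier).notMem_iff_infDist_pos hfr]
        rw [hU.frontier_eq]
        exact fun h => h.2 (hKU hu₀)
      · intro u hu x hx
        exact le_trans (hmin hu) (Metric.infDist_le_dist_of_mem hx)
    · exact ⟨1, one_pos, fun u _ x hx => absurd ⟨x, hx⟩ hfr⟩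
  -- choose n large
  obtain ⟨n, hnM⟩ := exists_nat_gt (max (max (max (1 / (s₀ - a)) (1 / (b - s₀)))
      (max (1 / δ) (1 + |L|))) (max (max ρ (1 / γ)) (max (1 / ε) 2)))
  have key : ∀ x : ℝ, x ≤ max (max (max (1 / (s₀ - a)) (1 / (b - s₀)))
      (max (1 / δ) (1 + |L|))) (max (max ρ (1 / γ)) (max (1 / ε) 2)) → x < (n : ℝ) :=
    fun x h => lt_of_le_of_lt h hnM
  have hn2 : (2 : ℝ) < (n : ℝ) :=
    key 2 ((le_max_right _ _).trans ((le_max_right _ _).trans (le_max_right _ _)))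
  have hn0 : 0 < n := by exact_mod_cast lt_trans (by norm_num : (0:ℝ) < 2) hn2
  have hn0' : (0 : ℝ) < (n : ℝ) := by exact_mod_cast hn0
  have hinv : ∀ p : ℝ, 0 < p → 1 / p < (n : ℝ) → 1 / (n : ℝ) < p := by
    intro p hp h
    rw [div_lt_iff₀ hp] at h
    rw [div_lt_iff₀ hn0']
    nlinarith
  have hn1 : (0 : ℝ) < 1 / (n : ℝ) := by positivity
  have hIa : 1 / (n : ℝ) < s₀ - a := hinv _ (by linarith [hs₀.1]) (key _ ((le_max_left _ _).trans ((le_max_left _ _).trans (le_max_left _ _))))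
  have hIb : 1 / (n : ℝ) < b - s₀ := hinv _ (by linarith [hs₀.2]) (key _ ((le_max_right _ _).trans ((le_max_left _ _).trans (le_max_left _ _))))
  have hIδ : 1 / (n : ℝ) < δ := hinv _ hδ (key _ ((le_max_left _ _).trans ((le_max_right _ _).trans (le_max_left _ _))))
  have hIL : 1 + |L| < (n : ℝ) := key _ ((le_max_right _ _).trans ((le_max_right _ _).trans (le_max_left _ _)))
  have hIρ : ρ < (n : ℝ) := key _ ((le_max_left _ _).trans ((le_max_left _ _).trans (le_max_right _ _)))
  have hIγ : 1 / (n : ℝ) < γ := hinv _ hγ.1 (key _ ((le_max_right _ _).trans ((le_max_left _ _).trans (le_max_right _ _))))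
  have hIε : 1 / (n : ℝ) < ε := hinv _ hε (key _ ((le_max_left _ _).trans ((le_max_right _ _).trans (le_max_right _ _))))
  set I : Set ℝ := Icc (-(1 / (n : ℝ))) (1 / n) with hIdef
  have hII : -(1 / (n : ℝ)) < 1 / n := by linarith
  have hJ : ∀ s ∈ I, s₀ + s ∈ big := by
    intro s hs
    obtain ⟨h1, h2⟩ := hs
    exact ⟨by linarith, by linarith⟩
  set ct : ℝ → EuclideanSpace ℝ (Fin d) := fun s => c (s₀ + s) with hct
  have hderiv : ∀ s ∈ I, HasDerivWithinAt ct (derivWithin c big (s₀ + s)) I s := by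
    intro s hs
    have h1 : HasDerivWithinAt c (derivWithin c big (s₀ + s)) big (s₀ + s) :=
      ((hC1.differentiableOn one_ne_zero) _ (hJ s hs)).hasDerivWithinAt
    have h2 : HasDerivWithinAt (fun u : ℝ => s₀ + u) 1 I s :=
      (hasDerivWithinAt_id s I).const_add s₀
    have := h1.scomp s h2 (fun t ht => hJ t ht)
    rw [one_smul] at this; exact this
  have hdW : ∀ s ∈ I, derivWithin ct I s = derivWithin c big (s₀ + s) := by
    intro s hs
    exact (hderiv s hs).derivWithin ((uniqueDiffOn_Icc hII) s hs)
  -- contradiction with hf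
  refine hf n hn0 ⟨ct, ⟨?_, ?_, ?_, ?_⟩, ?_⟩
  · -- ContDiffOn
    have haff : ContDiffOn ℝ 1 (fun u : ℝ => s₀ + u) I :=
      (contDiff_const.add contDiff_id).contDiffOn
    exact hC1.comp haff (fun s hs => hJ s hs)
  · -- unit speed
    intro s hs
    rw [hdW s hs]
    exact hspeed _ (hJ s hs)
  · -- Hölder
    intro s₁ h₁ s₂ h₂
    rw [hdW _ h₁, hdW _ h₂]
    have hb := hHold _ (hJ _ h₁) _ (hJ _ h₂)
    have e : s₀ + s₂ - (s₀ + s₁) = s₂ - s₁ := by ring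
    rw [e] at hb
    have hx1 : |s₂ - s₁| ≤ 1 := by
      have h12 : 1 / (n : ℝ) < 1 / 2 := by
        rw [div_lt_div_iff₀ hn0' (by norm_num)]; linarith
      rw [abs_le]
      obtain ⟨a1, a2⟩ := h₁; obtain ⟨b1, b2⟩ := h₂
      constructor <;> linarith
    rcases eq_or_lt_of_le (abs_nonneg (s₂ - s₁)) with h0 | h0
    · rw [← h0] at hb ⊢
      rw [Real.zero_rpow (ne_of_gt hγ.1)] at hb
      rw [Real.zero_rpow (one_div_pos.mpr hn0').ne']
      simpa using hb
    · have hpow : |s₂ - s₁| ^ γ ≤ |s₂ - s₁| ^ (1 / (n : ℝ)) :=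
        Real.rpow_le_rpow_of_exponent_ge h0 hx1 (le_of_lt hIγ)
      calc ‖derivWithin c big (s₀ + s₂) - derivWithin c big (s₀ + s₁)‖
          ≤ ρ * |s₂ - s₁| ^ γ := hb
        _ ≤ (n : ℝ) * |s₂ - s₁| ^ (1 / (n : ℝ)) := by
            apply mul_le_mul (le_of_lt hIρ) hpow (Real.rpow_nonneg (abs_nonneg _) _)
              (le_of_lt hn0')
  · -- image in Kset
    intro s hs
    refine ⟨himg _ (hJ s hs), fun x hx => ?_⟩
    rw [← dist_eq_norm]
    exact le_trans (le_of_lt hIε) (hεd _ ⟨s₀ + s, hJ s hs, rfl⟩ x hx)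
  · -- the Lipschitz-type bound
    intro s hs
    have hs' : |s| ≤ 1 / (n : ℝ) := by
      rw [abs_le]; exact ⟨by linarith [hs.1], hs.2⟩
    have ht : s₀ + s ∈ Metric.ball s₀ δ ∩ big := by
      refine ⟨?_, hJ s hs⟩
      rw [Metric.mem_ball, Real.dist_eq]
      have : s₀ + s - s₀ = s := by ring
      rw [this]
      linarith
    have hb := hbound ht
    simp only [mem_setOf_eq, Function.comp_apply] at hb
    have e : s₀ + s - s₀ = s := by ring
    rw [e] at hb
    have hb' : |F (c (s₀ + s)) - F (c s₀) - s * L| ≤ |s| := by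
      simpa [Real.norm_eq_abs, smul_eq_mul] using hb
    have habs : |F (c (s₀ + s)) - F (c s₀)| ≤ |s| + |s| * |L| := by
      have := abs_add_le (F (c (s₀ + s)) - F (c s₀) - s * L) (s * L)
      simp only [sub_add_cancel] at this
      calc |F (c (s₀ + s)) - F (c s₀)| ≤ |F (c (s₀ + s)) - F (c s₀) - s * L| + |s * L| := this
        _ ≤ |s| + |s| * |L| := by rw [abs_mul]; linarith
    have : ct s = c (s₀ + s) := rfl
    have h0 : ct 0 = c s₀ := by simp [hct]
    rw [this, h0]
    have : |s| + |s| * |L| ≤ (n : ℝ) * |s| := by nlinarith [abs_nonneg s, abs_nonneg L]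
    linarith
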